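/- Fix ε ∈ ℝ and consider the bivector on ℝ³ with brackets {x,y} = z, {y,z} = x·(z + ε − x² − y²), {z,x} = y·(z + ε − x² − y²). This bivector satisfies the Jacobi identity (hence is a Poisson structure), and its set of singular points equals {(0,0,0)} ∪ {(x,y,0) : x² + y² = ε}. In particular, for ε ≤ 0 the origin is the unique singular point, while for ε > 0 the singular set is the union of the origin and a circle of radius √ε in the plane z = 0. -/

import Mathlib

noncomputable def pdx (F : ℝ × ℝ × ℝ → ℝ) (p : ℝ × ℝ × ℝ) : ℝ := fderiv ℝ F p (1, 0, 0)
noncomputable def pdy (F : ℝ × ℝ × ℝ → ℝ) (p : ℝ × ℝ × ℝ) : ℝ := fderiv ℝ F p (0, 1, 0)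
noncomputable def pdz (F : ℝ × ℝ × ℝ → ℝ) (p : ℝ × ℝ × ℝ) : ℝ := fderiv ℝ F p (0, 0, 1)

noncomputable def jacobiExpr (B C D : ℝ × ℝ × ℝ → ℝ) (p : ℝ × ℝ × ℝ) : ℝ :=
  B p * (pdx D p - pdy C p) + C p * (pdy B p - pdz D p) + D p * (pdz C p - pdx B p)

section aux
noncomputable def Xm : ℝ × ℝ × ℝ →L[ℝ] ℝ := ContinuousLinearMap.fst ℝ ℝ (ℝ × ℝ)
noncomputable def Ym : ℝ × ℝ × ℝ →L[ℝ] ℝ :=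
  (ContinuousLinearMap.fst ℝ ℝ ℝ).comp (ContinuousLinearMap.snd ℝ ℝ (ℝ × ℝ))
noncomputable def Zm : ℝ × ℝ × ℝ →L[ℝ] ℝ :=
  (ContinuousLinearMap.snd ℝ ℝ ℝ).comp (ContinuousLinearMap.snd ℝ ℝ (ℝ × ℝ))

lemma hasX (p : ℝ × ℝ × ℝ) : HasFDerivAt (fun q : ℝ × ℝ × ℝ => q.1) Xm p := hasFDerivAt_fst

lemma hasY (p : ℝ × ℝ × ℝ) : HasFDerivAt (fun q : ℝ × ℝ × ℝ => q.2.1) Ym p :=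
  hasFDerivAt_fst.comp p hasFDerivAt_snd

lemma hasZ (p : ℝ × ℝ × ℝ) : HasFDerivAt (fun q : ℝ × ℝ × ℝ => q.2.2) Zm p :=
  hasFDerivAt_snd.comp p hasFDerivAt_snd

lemma hasG (ε : ℝ) (p : ℝ × ℝ × ℝ) :
    HasFDerivAt (fun q : ℝ × ℝ × ℝ => q.2.2 + ε - q.1 ^ 2 - q.2.1 ^ 2)
      ((Zm - (p.1 • Xm + p.1 • Xm)) - (p.2.1 • Ym + p.2.1 • Ym)) p := by
  simp only [pow_two]
  exact (((hasZ p).add_const ε).sub ((hasX p).mul (hasX p))).sub ((hasY p).mul (hasY p))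

lemma Xa (v : ℝ × ℝ × ℝ) : Xm v = v.1 := rfl
lemma Ya (v : ℝ × ℝ × ℝ) : Ym v = v.2.1 := rfl
lemma Za (v : ℝ × ℝ × ℝ) : Zm v = v.2.2 := rfl
end aux

theorem stmt_18 (ε : ℝ) (B C D : ℝ × ℝ × ℝ → ℝ)
    (hB : B = fun p => p.2.2)
    (hC : C = fun p => p.1 * (p.2.2 + ε - p.1 ^ 2 - p.2.1 ^ 2))
    (hD : D = fun p => p.2.1 * (p.2.2 + ε - p.1 ^ 2 - p.2.1 ^ 2))
    (S : Set (ℝ × ℝ × ℝ)) (hS : S = {p | B p = 0 ∧ C p = 0 ∧ D p = 0}) :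
    (∀ p : ℝ × ℝ × ℝ, jacobiExpr B C D p = 0) ∧
    S = {((0 : ℝ), (0 : ℝ), (0 : ℝ))} ∪ {p | p.2.2 = 0 ∧ p.1 ^ 2 + p.2.1 ^ 2 = ε} ∧
    (ε ≤ 0 → S = {((0 : ℝ), (0 : ℝ), (0 : ℝ))}) ∧
    (0 < ε → S = {((0 : ℝ), (0 : ℝ), (0 : ℝ))} ∪
      {p | p.2.2 = 0 ∧ p.1 ^ 2 + p.2.1 ^ 2 = Real.sqrt ε ^ 2}) := by
  subst hB hC hD hS
  refine ⟨?_, ?_, ?_, ?_⟩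
  · intro p
    have hBf := (hasZ p).fderiv
    have hCf : fderiv ℝ (fun q : ℝ × ℝ × ℝ => q.1 * (q.2.2 + ε - q.1 ^ 2 - q.2.1 ^ 2)) p =
        p.1 • (Zm - (p.1 • Xm + p.1 • Xm) - (p.2.1 • Ym + p.2.1 • Ym)) + (p.2.2 + ε - p.1 ^ 2 - p.2.1 ^ 2) • Xm :=
      ((hasX p).mul (hasG ε p)).fderiv
    have hDf : fderiv ℝ (fun q : ℝ × ℝ × ℝ => q.2.1 * (q.2.2 + ε - q.1 ^ 2 - q.2.1 ^ 2)) p =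
        p.2.1 • (Zm - (p.1 • Xm + p.1 • Xm) - (p.2.1 • Ym + p.2.1 • Ym)) + (p.2.2 + ε - p.1 ^ 2 - p.2.1 ^ 2) • Ym :=
      ((hasY p).mul (hasG ε p)).fderiv
    simp only [jacobiExpr, pdx, pdy, pdz, hBf, hCf, hDf,
      ContinuousLinearMap.add_apply, ContinuousLinearMap.sub_apply,
      ContinuousLinearMap.smul_apply, Xa, Ya, Za, smul_eq_mul]
    ring
  · ext ⟨x, y, z⟩
    simp only [Set.mem_setOf_eq, Set.mem_union, Set.mem_singleton_iff, Prod.mk.injEq]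
    constructor
    · rintro ⟨hz, hc, hd⟩
      subst hz
      simp only [add_zero] at *
      rcases eq_or_ne (ε - x ^ 2 - y ^ 2) 0 with h | h
      · right; exact ⟨by trivial, by linarith⟩
      · left
        have hx : x = 0 := by
          rcases mul_eq_zero.1 (by linarith [hc] : x * (0 + ε - x ^ 2 - y ^ 2) = 0) with h' | h'
          · exact h'
          · exact absurd (by linarith) h
        have hy : y = 0 := by
          rcases mul_eq_zero.1 (by linarith [hd] : y * (0 + ε - x ^ 2 - y ^ 2) = 0) with h' | h'
          · exact h'
          · exact absurd (by linarith) h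
        exact ⟨hx, hy, by trivial⟩
    · rintro (⟨hx, hy, hz⟩ | ⟨hz, hr⟩) <;> subst hz
      · subst hx; subst hy; norm_num
      · have h0 : 0 + ε - x ^ 2 - y ^ 2 = 0 := by linarith
        exact ⟨rfl, by rw [h0, mul_zero], by rw [h0, mul_zero]⟩
  · intro hε
    ext ⟨x, y, z⟩
    simp only [Set.mem_setOf_eq, Set.mem_singleton_iff, Prod.mk.injEq]
    constructor
    · rintro ⟨hz, hc, hd⟩
      subst hz
      have key : x = 0 ∧ y = 0 := by
        rcases mul_eq_zero.1 hc with h | h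
        · rcases mul_eq_zero.1 hd with h' | h'
          · exact ⟨h, h'⟩
          · have hx2 : x ^ 2 = 0 := by nlinarith [sq_nonneg x, sq_nonneg y]
            have hy2 : y ^ 2 = 0 := by nlinarith [sq_nonneg x, sq_nonneg y]
            exact ⟨pow_eq_zero_iff two_ne_zero |>.1 hx2, pow_eq_zero_iff two_ne_zero |>.1 hy2⟩
        · have hx2 : x ^ 2 = 0 := by nlinarith [sq_nonneg x, sq_nonneg y]
          have hy2 : y ^ 2 = 0 := by nlinarith [sq_nonneg x, sq_nonneg y]
          exact ⟨pow_eq_zero_iff two_ne_zero |>.1 hx2, pow_eq_zero_iff two_ne_zero |>.1 hy2⟩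
      exact ⟨key.1, key.2, by trivial⟩
    · rintro ⟨hx, hy, hz⟩; subst hx; subst hy; subst hz; norm_num
  · intro hε
    have : Real.sqrt ε ^ 2 = ε := Real.sq_sqrt hε.le
    rw [this]
    ext ⟨x, y, z⟩
    simp only [Set.mem_setOf_eq, Set.mem_union, Set.mem_singleton_iff, Prod.mk.injEq]
    constructor
    · rintro ⟨hz, hc, hd⟩
      subst hz
      rcases eq_or_ne (ε - x ^ 2 - y ^ 2) 0 with h | h
      · right; exact ⟨by trivial, by linarith⟩
      · left
        have hx : x = 0 := by
          rcases mul_eq_zero.1 (by linarith [hc] : x * (0 + ε - x ^ 2 - y ^ 2) = 0) with h' | h'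
          · exact h'
          · exact absurd (by linarith) h
        have hy : y = 0 := by
          rcases mul_eq_zero.1 (by linarith [hd] : y * (0 + ε - x ^ 2 - y ^ 2) = 0) with h' | h'
          · exact h'
          · exact absurd (by linarith) h
        exact ⟨hx, hy, by trivial⟩
    · rintro (⟨hx, hy, hz⟩ | ⟨hz, hr⟩) <;> subst hz
      · subst hx; subst hy; norm_num
      · have h0 : 0 + ε - x ^ 2 - y ^ 2 = 0 := by linarith
        exact ⟨rfl, by rw [h0, mul_zero], by rw [h0, mul_zero]⟩
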